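/- Let k ≥ 3 and G = C(3k+1; {1,2,4}). For e = v_1 v_5, the set S = {v_2, v_3, v_{3k+1}} ∪ ⋃_{t=2}^{k} {v_{3t−2}, v_{3t}} is a vertex cut of G−e with |S| = 2k+1 and c((G−e)−S) = k; hence τ(G−e) ≤ (2k+1)/k < 2k/(k−1). -/

import Mathlib

open SimpleGraph

def circGraph (n : ℕ) (s : Set (ZMod n)) : SimpleGraph (ZMod n) where
  Adj i j := i ≠ j ∧ (i - j ∈ s ∨ j - i ∈ s)
  symm := ⟨fun i j h => ⟨h.1.symm, h.2.symm⟩⟩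
  loopless := ⟨fun i h => h.1 rfl⟩

/-- Number of connected components of `G - S`. -/
noncomputable def numComp {V : Type*} (G : SimpleGraph V) (S : Set V) : ℕ :=
  Nat.card ((G.induce Sᶜ).ConnectedComponent)

/-- `S` is a vertex cut: removing `S` leaves a disconnected graph. -/
def IsVertexCut {V : Type*} (G : SimpleGraph V) (S : Set V) : Prop :=
  1 < numComp G S

/-- Toughness: minimum of |S| / c(G - S) over vertex cuts `S`. -/
noncomputable def toughness {V : Type*} (G : SimpleGraph V) : ℝ :=
  sInf {x : ℝ | ∃ S : Set V, IsVertexCut G S ∧ x = (S.ncard : ℝ) / (numComp G S : ℝ)}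

def MinimallyTough {V : Type*} (G : SimpleGraph V) (t : ℝ) : Prop :=
  toughness G = t ∧ ∀ e ∈ G.edgeSet, toughness (G.deleteEdges {e}) < t

private lemma cast_inj_lt {n : ℕ} (a b : ℕ) (ha : a < n) (hb : b < n) :
    ((a : ZMod n) = (b : ZMod n)) ↔ a = b := by
  rw [ZMod.natCast_eq_natCast_iff, Nat.ModEq, Nat.mod_eq_of_lt ha, Nat.mod_eq_of_lt hb]

private lemma cast_sub_eq {n : ℕ} (m m' c : ℕ) (hm : m < n) (hm' : m' < n) (hc : c < n) :
    ((m : ZMod n) - (m' : ZMod n) = (c : ZMod n)) ↔ (m = m' + c ∨ m + n = m' + c) := by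
  rw [sub_eq_iff_eq_add, ← Nat.cast_add, ZMod.natCast_eq_natCast_iff, Nat.ModEq,
    Nat.mod_eq_of_lt hm]
  rcases lt_or_ge (c + m') n with h1 | h1
  · rw [Nat.mod_eq_of_lt h1]; omega
  · rw [Nat.mod_eq_sub_mod h1, Nat.mod_eq_of_lt (by omega)]; omega

/-- Connected components of the empty graph biject with the vertices. -/
private def botCompEquiv (W : Type*) : W ≃ (⊥ : SimpleGraph W).ConnectedComponent where
  toFun := fun v => (⊥ : SimpleGraph W).connectedComponentMk v
  invFun := SimpleGraph.ConnectedComponent.lift id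
    (fun _ _ p _ => (SimpleGraph.reachable_bot).mp ⟨p⟩)
  left_inv _ := rfl
  right_inv := SimpleGraph.ConnectedComponent.ind (fun _ => rfl)

theorem stmt16 (k : ℕ) (hk : 3 ≤ k) :
    let G := circGraph (3*k+1) {1, 2, 4}
    let G' := G.deleteEdges {s(((1 : ℕ) : ZMod (3*k+1)), ((5 : ℕ) : ZMod (3*k+1)))}
    let S : Set (ZMod (3*k+1)) :=
      {v | v = ((2 : ℕ) : ZMod (3*k+1)) ∨ v = ((3 : ℕ) : ZMod (3*k+1)) ∨
        v = ((3*k+1 : ℕ) : ZMod (3*k+1)) ∨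
        ∃ t : ℕ, 2 ≤ t ∧ t ≤ k ∧
          (v = ((3*t-2 : ℕ) : ZMod (3*k+1)) ∨ v = ((3*t : ℕ) : ZMod (3*k+1)))}
    IsVertexCut G' S ∧ S.ncard = 2*k + 1 ∧ numComp G' S = k ∧
      toughness G' ≤ (2*(k : ℝ) + 1) / (k : ℝ) ∧
      (2*(k : ℝ) + 1) / (k : ℝ) < (2*(k : ℝ)) / ((k : ℝ) - 1) := by
  intro G G' S
  haveI : NeZero (3*k+1) := ⟨by omega⟩
  -- membership characterization of S for natural representatives below 3k+1
  have hS : ∀ m : ℕ, m < 3*k+1 →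
      (((m : ℕ) : ZMod (3*k+1)) ∈ S ↔
        (m = 0 ∨ m = 2 ∨ m = 3 ∨ ∃ t, 2 ≤ t ∧ t ≤ k ∧ (m = 3*t-2 ∨ m = 3*t))) := by
    intro m hm
    have h0 : ((3*k+1 : ℕ) : ZMod (3*k+1)) = ((0 : ℕ) : ZMod (3*k+1)) := by
      simp [ZMod.natCast_self]
    show (_ = _ ∨ _ = _ ∨ _ = _ ∨ _) ↔ _
    rw [h0, cast_inj_lt m 2 hm (by omega), cast_inj_lt m 3 hm (by omega),
      cast_inj_lt m 0 hm (by omega)]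
    constructor
    · rintro (h | h | h | ⟨t, ht2, htk, h | h⟩)
      · exact Or.inr (Or.inl h)
      · exact Or.inr (Or.inr (Or.inl h))
      · exact Or.inl h
      · exact Or.inr (Or.inr (Or.inr ⟨t, ht2, htk,
          Or.inl ((cast_inj_lt m (3*t-2) hm (by omega)).mp h)⟩))
      · exact Or.inr (Or.inr (Or.inr ⟨t, ht2, htk,
          Or.inr ((cast_inj_lt m (3*t) hm (by omega)).mp h)⟩))
    · rintro (h | h | h | ⟨t, ht2, htk, h | h⟩)
      · exact Or.inr (Or.inr (Or.inl h))
      · exact Or.inl h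
      · exact Or.inr (Or.inl h)
      · exact Or.inr (Or.inr (Or.inr ⟨t, ht2, htk,
          Or.inl ((cast_inj_lt m (3*t-2) hm (by omega)).mpr h)⟩))
      · exact Or.inr (Or.inr (Or.inr ⟨t, ht2, htk,
          Or.inr ((cast_inj_lt m (3*t) hm (by omega)).mpr h)⟩))
  -- complement characterization
  have hSc : ∀ m : ℕ, m < 3*k+1 →
      (((m : ℕ) : ZMod (3*k+1)) ∉ S ↔
        (m = 1 ∨ ∃ t, 2 ≤ t ∧ t ≤ k ∧ m = 3*t-1)) := by
    intro m hm
    rw [hS m hm]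
    constructor
    · intro h
      push_neg at h
      obtain ⟨h0, h2, h3, h4⟩ := h
      rcases (show m % 3 = 0 ∨ m % 3 = 1 ∨ m % 3 = 2 by omega) with hr | hr | hr
      · exact absurd (show m = 3*(m/3) by omega) (h4 (m/3) (by omega) (by omega)).2
      · rcases (show m = 1 ∨ 4 ≤ m by omega) with h | h
        · exact Or.inl h
        · exact absurd (show m = 3*((m+2)/3)-2 by omega)
            (h4 ((m+2)/3) (by omega) (by omega)).1
      · refine Or.inr ⟨(m+1)/3, by omega, by omega, by omega⟩
    · rintro (h | ⟨t, ht2, htk, h⟩) <;>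
        rintro (h' | h' | h' | ⟨s, hs2, hsk, (h' | h')⟩) <;> omega
  -- the complement as a finset image
  classical
  set TF : Finset ℕ := insert 1 ((Finset.Icc 2 k).image fun t => 3*t-1) with hTFdef
  have hTF_iff : ∀ m : ℕ, m ∈ TF ↔ (m = 1 ∨ ∃ t, 2 ≤ t ∧ t ≤ k ∧ m = 3*t-1) := by
    intro m
    simp only [hTFdef, Finset.mem_insert, Finset.mem_image, Finset.mem_Icc]
    constructor
    · rintro (h | ⟨t, ⟨ht2, htk⟩, h⟩)
      · exact Or.inl h
      · exact Or.inr ⟨t, ht2, htk, h.symm⟩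
    · rintro (h | ⟨t, ht2, htk, h⟩)
      · exact Or.inl h
      · exact Or.inr ⟨t, ⟨ht2, htk⟩, h.symm⟩
  have hTFlt : ∀ m ∈ TF, m < 3*k+1 := by
    intro m hm
    rcases (hTF_iff m).mp hm with h | ⟨t, ht2, htk, h⟩ <;> omega
  have hTFcard : TF.card = k := by
    rw [hTFdef, Finset.card_insert_of_notMem, Finset.card_image_of_injOn]
    · rw [Nat.card_Icc]; omega
    · intro a ha b hb hab
      simp only [Finset.mem_coe, Finset.mem_Icc] at ha hb
      dsimp only at hab
      omega
    · simp only [Finset.mem_image, Finset.mem_Icc, not_exists]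
      intro t ⟨ht, h⟩
      omega
  have hcompl : Sᶜ = ↑(TF.image (fun m : ℕ => (m : ZMod (3*k+1)))) := by
    ext x
    simp only [Finset.coe_image, Set.mem_image, Finset.mem_coe, Set.mem_compl_iff]
    constructor
    · intro hx
      refine ⟨x.val, ?_, ZMod.natCast_rightInverse x⟩
      rw [hTF_iff]
      refine (hSc x.val (ZMod.val_lt x)).mp ?_
      rw [ZMod.natCast_rightInverse x]
      exact hx
    · rintro ⟨m, hm, rfl⟩
      exact (hSc m (hTFlt m hm)).mpr ((hTF_iff m).mp hm)
  have hSc_card : Sᶜ.ncard = k := by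
    rw [hcompl, Set.ncard_coe_finset, Finset.card_image_of_injOn, hTFcard]
    intro a ha b hb hab
    exact (cast_inj_lt a b (hTFlt a ha) (hTFlt b hb)).mp hab
  have hScard : S.ncard = 2*k + 1 := by
    have h1 := Set.ncard_add_ncard_compl S
    rw [hSc_card, Nat.card_zmod] at h1
    omega
  -- no edges among complement vertices
  have key : ∀ x y : ZMod (3*k+1), x ∉ S → y ∉ S → ¬ G'.Adj x y := by
    intro x y hx hy hadj
    have hxv : ((x.val : ℕ) : ZMod (3*k+1)) = x := ZMod.natCast_rightInverse x
    have hyv : ((y.val : ℕ) : ZMod (3*k+1)) = y := ZMod.natCast_rightInverse y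
    have hQx : x.val = 1 ∨ ∃ t, 2 ≤ t ∧ t ≤ k ∧ x.val = 3*t-1 :=
      (hSc x.val (ZMod.val_lt x)).mp (by rw [hxv]; exact hx)
    have hQy : y.val = 1 ∨ ∃ t, 2 ≤ t ∧ t ≤ k ∧ y.val = 3*t-1 :=
      (hSc y.val (ZMod.val_lt y)).mp (by rw [hyv]; exact hy)
    -- only possible adjacency corresponds to the deleted edge
    have aux : ∀ a b : ℕ, a < 3*k+1 → b < 3*k+1 →
        (a = 1 ∨ ∃ t, 2 ≤ t ∧ t ≤ k ∧ a = 3*t-1) →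
        (b = 1 ∨ ∃ t, 2 ≤ t ∧ t ≤ k ∧ b = 3*t-1) →
        ((a : ZMod (3*k+1)) - (b : ZMod (3*k+1)) ∈ ({1, 2, 4} : Set (ZMod (3*k+1)))) →
        a = 5 ∧ b = 1 := by
      intro a b ha hb hQa hQb hmem
      simp only [Set.mem_insert_iff, Set.mem_singleton_iff] at hmem
      rw [show (1 : ZMod (3*k+1)) = ((1 : ℕ) : ZMod (3*k+1)) by norm_cast,
        show (2 : ZMod (3*k+1)) = ((2 : ℕ) : ZMod (3*k+1)) by norm_cast,
        show (4 : ZMod (3*k+1)) = ((4 : ℕ) : ZMod (3*k+1)) by norm_cast] at hmem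
      have hd : (a = b + 1 ∨ a + (3*k+1) = b + 1) ∨ (a = b + 2 ∨ a + (3*k+1) = b + 2) ∨
          (a = b + 4 ∨ a + (3*k+1) = b + 4) := by
        rcases hmem with h | h | h
        · exact Or.inl ((cast_sub_eq a b 1 ha hb (by omega)).mp h)
        · exact Or.inr (Or.inl ((cast_sub_eq a b 2 ha hb (by omega)).mp h))
        · exact Or.inr (Or.inr ((cast_sub_eq a b 4 ha hb (by omega)).mp h))
      rcases hQa with h1 | ⟨t, ht2, htk, h1⟩ <;> rcases hQb with h2 | ⟨s, hs2, hsk, h2⟩ <;>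
        omega
    have hadj' : ((circGraph (3*k+1) {1, 2, 4}).deleteEdges
        {s(((1 : ℕ) : ZMod (3*k+1)), ((5 : ℕ) : ZMod (3*k+1)))}).Adj x y := hadj
    rw [deleteEdges_adj] at hadj'
    obtain ⟨hGadj, hdel⟩ := hadj'
    obtain ⟨hne, hd⟩ := (hGadj : x ≠ y ∧ (x - y ∈ ({1, 2, 4} : Set (ZMod (3*k+1))) ∨
      y - x ∈ ({1, 2, 4} : Set (ZMod (3*k+1)))))
    have h15 : s(x, y) = s(((1 : ℕ) : ZMod (3*k+1)), ((5 : ℕ) : ZMod (3*k+1))) := by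
      rcases hd with h | h
      · have := aux x.val y.val (ZMod.val_lt x) (ZMod.val_lt y) hQx hQy
          (by rw [hxv, hyv]; exact h)
        rw [← hxv, ← hyv, this.1, this.2, Sym2.eq_swap]
      · have := aux y.val x.val (ZMod.val_lt y) (ZMod.val_lt x) hQy hQx
          (by rw [hxv, hyv]; exact h)
        rw [← hxv, ← hyv, this.1, this.2]
    exact hdel (Set.mem_singleton_iff.mpr h15)
  -- induced graph on the complement is edgeless
  have hbot : G'.induce Sᶜ = ⊥ := by
    ext ⟨a, ha⟩ ⟨b, hb⟩
    simp only [comap_adj, Function.Embedding.coe_subtype, bot_adj, iff_false]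
    exact key a b ha hb
  have hnum : numComp G' S = k := by
    unfold numComp
    rw [hbot, ← Nat.card_congr (botCompEquiv ↥Sᶜ), Nat.card_coe_set_eq, hSc_card]
  have hcut : IsVertexCut G' S := by
    unfold IsVertexCut
    rw [hnum]; omega
  refine ⟨hcut, hScard, hnum, ?_, ?_⟩
  · apply csInf_le
    · refine ⟨0, fun x hx => ?_⟩
      obtain ⟨T, _, rfl⟩ := hx
      positivity
    · refine ⟨S, hcut, ?_⟩
      rw [hScard, hnum]
      push_cast
      ring
  · have hk3 : (3 : ℝ) ≤ (k : ℝ) := by exact_mod_cast hk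
    rw [div_lt_div_iff₀ (by linarith) (by linarith)]
    nlinarith
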